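/- For all α with 1 < α < 5/4, the new bound J(α) is strictly smaller than the old bound L(α) := (15 - 2α - 8α²)/3. -/
import Mathlib

theorem J_lt_L (α : ℝ) (h1 : 1 < α) (h2 : α < 5/4) :
    36*(3-α)*(3+2*α)*(5-4*α) / (-64*α^3 + 272*α^2 - 300*α + 369)
      < (15 - 2*α - 8*α^2) / 3 := by
  have hD : (0:ℝ) < -64*α^3 + 272*α^2 - 300*α + 369 := by nlinarith [sq_nonneg α, sq_nonneg (α-1), mul_pos (sub_pos.2 h1) (sub_pos.2 h2)]
  rw [div_lt_div_iff₀ hD (by norm_num : (0:ℝ) < 3)]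
  nlinarith [mul_pos (sub_pos.2 h1) (sub_pos.2 h2), sq_nonneg (α-1), sq_nonneg α, mul_pos (mul_pos (sub_pos.2 h1) (sub_pos.2 h2)) (sub_pos.2 h1)]
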